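/- Let w be a differentiable positive function on an interval satisfying w'(x)/w(x) = (g(x) - f'(x))/f(x) wherever f(x) ≠ 0. Let M(x) = (ax+b)/(cx+d), Δ = ad - bc ≠ 0, and define ω(x) = w(M(x)) M'(x) = Δ w(M(x))/(cx+d)^2. Then ω satisfies ω'(x)/ω(x) = (G(x) - F'(x))/F(x), where F(x) = ((cx+d)^4/Δ^2) f(M(x)) and G(x) = (2c(cx+d)^3/Δ^2) f(M(x)) + ((cx+d)^2/Δ) g(M(x)), at points where all quantities are defined and nonzero. -/

import Mathlib

open Polynomial

set_option maxHeartbeats 1000000 in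
lemma key_alg (Δ u W Fm Fd Gm c : ℂ) (hΔ : Δ ≠ 0) (hu : u ≠ 0)
    (hf : Fm ≠ 0) (hW : W ≠ 0) :
    ((Δ * (W * ((Gm - Fd) / Fm) * (Δ / u ^ 2)) * u ^ 2 - Δ * W * (2 * u ^ 1 * c)) /
        (u ^ 2) ^ 2) / (Δ * W / u ^ 2) =
      ((2 * c * u ^ 3 / Δ ^ 2 * Fm + u ^ 2 / Δ * Gm) -
        (4 * u ^ 3 * c / Δ ^ 2 * Fm + u ^ 4 / Δ ^ 2 * (Fd * (Δ / u ^ 2)))) /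
      (u ^ 4 / Δ ^ 2 * Fm) := by
  field_simp [hΔ, hu, hf, hW]
  ring_nf

theorem stmt_14 (a b c d : ℂ) (hΔ : a * d - b * c ≠ 0)
    (f g : Polynomial ℂ) (w : ℂ → ℂ) (hw : Differentiable ℂ w)
    (hPearson : ∀ x : ℂ, f.eval x ≠ 0 → w x ≠ 0 →
      deriv w x / w x = (g.eval x - f.derivative.eval x) / f.eval x)
    (ω F G : ℂ → ℂ)
    (hω : ∀ x, ω x = (a * d - b * c) * w ((a * x + b) / (c * x + d)) / (c * x + d) ^ 2)
    (hF : ∀ x, F x = (c * x + d) ^ 4 / (a * d - b * c) ^ 2 *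
      f.eval ((a * x + b) / (c * x + d)))
    (hG : ∀ x, G x = 2 * c * (c * x + d) ^ 3 / (a * d - b * c) ^ 2 *
        f.eval ((a * x + b) / (c * x + d)) +
      (c * x + d) ^ 2 / (a * d - b * c) * g.eval ((a * x + b) / (c * x + d))) :
    ∀ x : ℂ, c * x + d ≠ 0 → f.eval ((a * x + b) / (c * x + d)) ≠ 0 →
      w ((a * x + b) / (c * x + d)) ≠ 0 →
      deriv ω x / ω x = (G x - deriv F x) / F x := by
  intro x hu hf hwM
  have hnum : HasDerivAt (fun x : ℂ => a * x + b) a x := by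
    simpa using ((hasDerivAt_id x).const_mul a).add_const b
  have hden : HasDerivAt (fun x : ℂ => c * x + d) c x := by
    simpa using ((hasDerivAt_id x).const_mul c).add_const d
  have hMder : HasDerivAt (fun x : ℂ => (a * x + b) / (c * x + d))
      ((a * d - b * c) / (c * x + d) ^ 2) x := by
    have := hnum.fun_div hden hu
    exact this.congr_deriv (by ring)
  have hwMder : HasDerivAt (fun x : ℂ => w ((a * x + b) / (c * x + d)))
      (deriv w ((a * x + b) / (c * x + d)) * ((a * d - b * c) / (c * x + d) ^ 2)) x :=
    (hw.differentiableAt.hasDerivAt).comp x hMder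
  have hfMder : HasDerivAt (fun x : ℂ => f.eval ((a * x + b) / (c * x + d)))
      (f.derivative.eval ((a * x + b) / (c * x + d)) *
        ((a * d - b * c) / (c * x + d) ^ 2)) x :=
    (f.hasDerivAt _).comp x hMder
  have hden2 : HasDerivAt (fun x : ℂ => (c * x + d) ^ 2)
      (2 * (c * x + d) ^ 1 * c) x := by
    simpa using hden.fun_pow 2
  have hωder : HasDerivAt ω
      (((a * d - b * c) * (deriv w ((a * x + b) / (c * x + d)) *
          ((a * d - b * c) / (c * x + d) ^ 2)) * (c * x + d) ^ 2 -
        (a * d - b * c) * w ((a * x + b) / (c * x + d)) * (2 * (c * x + d) ^ 1 * c)) /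
        ((c * x + d) ^ 2) ^ 2) x := by
    rw [funext hω]
    exact (hwMder.const_mul _).div hden2 (pow_ne_zero 2 hu)
  have hcoef : HasDerivAt (fun x : ℂ => (c * x + d) ^ 4 / (a * d - b * c) ^ 2)
      (4 * (c * x + d) ^ 3 * c / (a * d - b * c) ^ 2) x := by
    simpa using (hden.pow 4).div_const ((a * d - b * c) ^ 2)
  have hFder : HasDerivAt F
      (4 * (c * x + d) ^ 3 * c / (a * d - b * c) ^ 2 *
          f.eval ((a * x + b) / (c * x + d)) +
        (c * x + d) ^ 4 / (a * d - b * c) ^ 2 *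
          (f.derivative.eval ((a * x + b) / (c * x + d)) *
            ((a * d - b * c) / (c * x + d) ^ 2))) x := by
    rw [funext hF]
    exact hcoef.mul hfMder
  have hPw : deriv w ((a * x + b) / (c * x + d)) =
      w ((a * x + b) / (c * x + d)) *
        ((g.eval ((a * x + b) / (c * x + d)) -
          f.derivative.eval ((a * x + b) / (c * x + d))) /
          f.eval ((a * x + b) / (c * x + d))) := by
    have hP := hPearson _ hf hwM
    rw [div_eq_iff hwM] at hP
    rw [hP]
    ring
  rw [hωder.deriv, hFder.deriv, hω x, hF x, hG x, hPw]
  exact key_alg (a * d - b * c) (c * x + d) _ _ _ _ c hΔ hu hf hwM
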